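/- If (C, A) is output-stable, then the observability gramian G = sum over all words v in F_d of A^{v*} C* C A^v (converging in the strong operator topology) satisfies the generalized Stein equation G - A_1* G A_1 - ... - A_d* G A_d = C* C, and G <= H for every positive semidefinite solution H of the Stein inequality H - sum_j A_j* H A_j >= C* C. -/

import Mathlib

open ContinuousLinearMap
open scoped InnerProductSpace

set_option linter.unusedSectionVars false
set_option linter.unusedVariables false
set_option maxHeartbeats 1000000

noncomputable section

variable {X Y : Type*}
  [NormedAddCommGroup X] [InnerProductSpace ℂ X] [CompleteSpace X]
  [NormedAddCommGroup Y] [InnerProductSpace ℂ Y] [CompleteSpace Y]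

/-- `A^v`: for a word `v = i_N … i_1` (stored as the list `[i_N, …, i_1]`), the
product `A_{i_N} ∘ A_{i_{N-1}} ∘ ⋯ ∘ A_{i_1}`. -/
def wordProd {d : ℕ} (A : Fin d → X →L[ℂ] X) (v : List (Fin d)) : X →L[ℂ] X :=
  (v.map A).prod

/-- `A^w` for a word of length `N` encoded as a function `w : Fin N → Fin d`. -/
def funProd {d N : ℕ} (A : Fin d → X →L[ℂ] X) (w : Fin N → Fin d) : X →L[ℂ] X :=
  wordProd A (List.ofFn w)


lemma wordProd_nil {d : ℕ} (A : Fin d → X →L[ℂ] X) : wordProd A [] = 1 := rfl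

lemma wordProd_cons {d : ℕ} (A : Fin d → X →L[ℂ] X) (j : Fin d) (v : List (Fin d)) :
    wordProd A (j :: v) = (A j) ∘L wordProd A v := by
  simp [wordProd, ContinuousLinearMap.mul_def]

lemma wordProd_concat {d : ℕ} (A : Fin d → X →L[ℂ] X) (j : Fin d) (v : List (Fin d)) :
    wordProd A (v.concat j) = wordProd A v ∘L (A j) := by
  simp [wordProd, ContinuousLinearMap.mul_def]

lemma funProd_cons {d N : ℕ} (A : Fin d → X →L[ℂ] X) (j : Fin d) (w : Fin N → Fin d) :
    funProd A (Fin.cons j w) = (A j) ∘L funProd A w := by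
  rw [funProd, List.ofFn_succ]
  simp only [Fin.cons_zero, Fin.cons_succ]
  rw [wordProd_cons]
  rfl

/-- the pointwise Stein identity -/
lemma stein_pointwise {d : ℕ} (A : Fin d → X →L[ℂ] X) (C : X →L[ℂ] Y) (G : X →L[ℂ] X)
    (hG : ∀ x : X, HasSum
      (fun v : List (Fin d) => adjoint (wordProd A v) ((adjoint C) (C (wordProd A v x))))
      (G x)) (x : X) :
    G x = adjoint C (C x) + ∑ j, adjoint (A j) (G (A j x)) := by
  classical
  set f : List (Fin d) → X :=
    fun v => adjoint (wordProd A v) ((adjoint C) (C (wordProd A v x))) with hf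
  have h1 : ∀ j : Fin d, HasSum (fun v : List (Fin d) => f (v.concat j))
      (adjoint (A j) (G (A j x))) := by
    intro j
    have hfe : (fun v : List (Fin d) => f (v.concat j))
        = fun v => adjoint (A j)
            (adjoint (wordProd A v) ((adjoint C) (C (wordProd A v (A j x))))) := by
      funext v
      show adjoint (wordProd A (v.concat j)) ((adjoint C) (C (wordProd A (v.concat j) x))) = _
      rw [wordProd_concat, adjoint_comp]
      simp
    rw [hfe]
    exact (adjoint (A j)).hasSum (hG (A j x))
  -- sum over the product type
  have h2 : HasSum (fun p : Fin d × List (Fin d) => f (p.2.concat p.1))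
      (∑ j, adjoint (A j) (G (A j x))) := by
    have hj : ∀ j : Fin d, HasSum
        (fun p : Fin d × List (Fin d) => if p.1 = j then f (p.2.concat j) else 0)
        (adjoint (A j) (G (A j x))) := by
      intro j
      have hinj : Function.Injective (fun v : List (Fin d) => ((j, v) : Fin d × List (Fin d))) := by
        intro a b h; simpa using h
      have hvan : ∀ p : Fin d × List (Fin d),
          p ∉ Set.range (fun v : List (Fin d) => ((j, v) : Fin d × List (Fin d))) →
          (if p.1 = j then f (p.2.concat j) else 0) = 0 := by
        rintro ⟨k, w⟩ hp
        have : k ≠ j := by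
          intro h; subst h; exact hp ⟨w, rfl⟩
        simp [this]
      have hcomp : ((fun p : Fin d × List (Fin d) => if p.1 = j then f (p.2.concat j) else 0)
          ∘ fun v : List (Fin d) => (j, v)) = fun v : List (Fin d) => f (v.concat j) := by
        funext v
        simp [Function.comp]
      exact (hinj.hasSum_iff hvan).mp (hcomp ▸ h1 j)
    have hsum := hasSum_sum (s := (Finset.univ : Finset (Fin d)))
      (f := fun j (p : Fin d × List (Fin d)) => if p.1 = j then f (p.2.concat j) else 0)
      (a := fun j => adjoint (A j) (G (A j x))) (fun j _ => hj j)
    have : (fun p : Fin d × List (Fin d) =>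
        ∑ j, if p.1 = j then f (p.2.concat j) else 0)
        = fun p : Fin d × List (Fin d) => f (p.2.concat p.1) := by
      funext p
      simp
    rwa [this] at hsum
  have hinj2 : Function.Injective (fun p : Fin d × List (Fin d) => p.2.concat p.1) := by
    rintro ⟨j, v⟩ ⟨k, w⟩ h
    simp only [List.concat_inj] at h
    simp [h.1, h.2, Prod.ext_iff]
  have h3 : HasSum (fun v : List (Fin d) => if v = [] then 0 else f v)
      (∑ j, adjoint (A j) (G (A j x))) := by
    refine (hinj2.hasSum_iff ?_).mp ?_
    · intro v hv
      have : v = [] := by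
        by_contra hne
        exact hv ⟨(v.getLast hne, v.dropLast), by
          simpa [List.concat_eq_append] using List.dropLast_concat_getLast hne⟩
      simp [this]
    · have : ((fun v : List (Fin d) => if v = [] then 0 else f v)
          ∘ fun p : Fin d × List (Fin d) => p.2.concat p.1)
          = fun p : Fin d × List (Fin d) => f (p.2.concat p.1) := by
        funext p
        simp [Function.comp, List.concat_ne_nil]
      rwa [this]
  have h4 : HasSum (fun v : List (Fin d) => if v = [] then f [] else 0) (f []) :=
    hasSum_ite_eq ([] : List (Fin d)) (f [])
  have h5 := h4.add h3
  have h6 : (fun v : List (Fin d) =>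
      (if v = [] then f [] else 0) + (if v = [] then 0 else f v)) = f := by
    funext v
    by_cases hv : v = [] <;> simp [hv]
  rw [h6] at h5
  have := (hG x).unique h5
  rw [this]
  congr 1
  have hone : adjoint (1 : X →L[ℂ] X) = 1 := by
    rw [ContinuousLinearMap.one_def, adjoint_id]
  simp [hf, wordProd_nil, hone]

lemma inner_hasSum {d : ℕ} (A : Fin d → X →L[ℂ] X) (C : X →L[ℂ] Y) (G : X →L[ℂ] X)
    (hG : ∀ x : X, HasSum
      (fun v : List (Fin d) => adjoint (wordProd A v) ((adjoint C) (C (wordProd A v x))))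
      (G x)) (x y : X) :
    HasSum (fun v : List (Fin d) =>
      (inner ℂ (C (wordProd A v x)) (C (wordProd A v y)) : ℂ)) (inner ℂ x (G y) : ℂ) := by
  have h := (innerSL ℂ x).hasSum (hG y)
  have he : (fun v : List (Fin d) =>
      (innerSL ℂ x) (adjoint (wordProd A v) ((adjoint C) (C (wordProd A v y)))))
      = fun v : List (Fin d) => (inner ℂ (C (wordProd A v x)) (C (wordProd A v y)) : ℂ) := by
    funext v
    simp only [innerSL_apply_apply]
    rw [adjoint_inner_right, adjoint_inner_right]
  rwa [he] at h

lemma norm_hasSum {d : ℕ} (A : Fin d → X →L[ℂ] X) (C : X →L[ℂ] Y) (G : X →L[ℂ] X)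
    (hG : ∀ x : X, HasSum
      (fun v : List (Fin d) => adjoint (wordProd A v) ((adjoint C) (C (wordProd A v x))))
      (G x)) (x : X) :
    HasSum (fun v : List (Fin d) => ‖C (wordProd A v x)‖ ^ 2)
      (RCLike.re (inner ℂ x (G x) : ℂ)) := by
  have h := (RCLike.reCLM (K := ℂ)).hasSum (inner_hasSum A C G hG x x)
  have he : (fun v : List (Fin d) =>
      RCLike.reCLM (K := ℂ) (inner ℂ (C (wordProd A v x)) (C (wordProd A v x)) : ℂ))
      = fun v : List (Fin d) => ‖C (wordProd A v x)‖ ^ 2 := by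
    funext v
    simp [inner_self_eq_norm_sq, ← Complex.ofReal_pow, Complex.ofReal_re]
  rwa [he] at h

lemma G_selfAdjoint {d : ℕ} (A : Fin d → X →L[ℂ] X) (C : X →L[ℂ] Y) (G : X →L[ℂ] X)
    (hG : ∀ x : X, HasSum
      (fun v : List (Fin d) => adjoint (wordProd A v) ((adjoint C) (C (wordProd A v x))))
      (G x)) : IsSelfAdjoint G := by
  rw [ContinuousLinearMap.isSelfAdjoint_iff_isSymmetric]
  intro x y
  have h1 := inner_hasSum A C G hG y x
  have h2 := inner_hasSum A C G hG x y
  have h1c := h1.mapL (Complex.conjCLE.toContinuousLinearMap)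
  have he : (fun v : List (Fin d) =>
      Complex.conjCLE.toContinuousLinearMap
        ((inner ℂ (C (wordProd A v y)) (C (wordProd A v x)) : ℂ)))
      = fun v : List (Fin d) => (inner ℂ (C (wordProd A v x)) (C (wordProd A v y)) : ℂ) := by
    funext v
    simp [inner_conj_symm]
  rw [he] at h1c
  have := h2.unique h1c
  calc (inner ℂ (G x) y : ℂ) = (starRingEnd ℂ) (inner ℂ y (G x)) := (inner_conj_symm _ _).symm
    _ = (inner ℂ x (G y) : ℂ) := by
      rw [this]; simp

/-- If (C, A) is output-stable, the observability gramian `G = ∑_v A^{v*} C* C A^v`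
(converging strongly) satisfies the Stein equation `G - ∑_j A_j* G A_j = C* C` and is
the minimal positive semidefinite solution of the Stein inequality. -/
theorem stmt3 {d : ℕ} (A : Fin d → X →L[ℂ] X) (C : X →L[ℂ] Y) (G : X →L[ℂ] X)
    (hstable : ∀ x : X, Summable fun v : List (Fin d) => ‖C (wordProd A v x)‖ ^ 2)
    (hG : ∀ x : X, HasSum
      (fun v : List (Fin d) => adjoint (wordProd A v) ((adjoint C) (C (wordProd A v x))))
      (G x)) :
    G - ∑ j, adjoint (A j) ∘L G ∘L A j = adjoint C ∘L C ∧
    ∀ H : X →L[ℂ] X, H.IsPositive →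
      (H - ∑ j, adjoint (A j) ∘L H ∘L A j - adjoint C ∘L C).IsPositive →
      (H - G).IsPositive := by
  classical
  constructor
  · ext x
    rw [sub_apply, ContinuousLinearMap.sum_apply]
    simp only [comp_apply]
    rw [stein_pointwise A C G hG x, add_sub_cancel_right]
  · intro H hH hD
    have hGsa := G_selfAdjoint A C G hG
    refine ⟨hH.1.sub (ContinuousLinearMap.isSelfAdjoint_iff_isSymmetric.mp hGsa), ?_⟩
    intro x
    have hkey : ∀ y : X, ‖C y‖ ^ 2 + ∑ j, RCLike.re (inner ℂ (H ((A j) y)) ((A j) y) : ℂ)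
        ≤ RCLike.re (inner ℂ (H y) y : ℂ) := by
      intro y
      have h0 := hD.2 y
      rw [reApplyInnerSelf_apply] at h0
      simp only [sub_apply, ContinuousLinearMap.sum_apply, comp_apply, inner_sub_left,
        sum_inner, map_sub, map_sum, adjoint_inner_left] at h0
      rw [inner_self_eq_norm_sq] at h0
      linarith
    have hpos : ∀ y : X, 0 ≤ RCLike.re (inner ℂ (H y) y : ℂ) := by
      intro y
      have := hH.2 y
      rwa [reApplyInnerSelf_apply] at this
    have hind : ∀ N : ℕ,
        (∑ n ∈ Finset.range N, ∑ w : Fin n → Fin d, ‖C (funProd A w x)‖ ^ 2)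
          + ∑ w : Fin N → Fin d, RCLike.re (inner ℂ (H (funProd A w x)) (funProd A w x) : ℂ)
          ≤ RCLike.re (inner ℂ (H x) x : ℂ) := by
      intro N
      induction N with
      | zero =>
        have h1 : ∀ w : Fin 0 → Fin d, funProd A w x = x := by
          intro w
          simp [funProd, List.ofFn_zero, wordProd_nil]
        simp only [Finset.range_zero, Finset.sum_empty, zero_add, h1]
        rw [Fintype.sum_unique]
      | succ N ih =>
        have step : ∑ w : Fin N → Fin d, (‖C (funProd A w x)‖ ^ 2
            + ∑ j, RCLike.re
              (inner ℂ (H (funProd A (Fin.cons j w) x)) (funProd A (Fin.cons j w) x) : ℂ))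
            ≤ ∑ w : Fin N → Fin d,
              RCLike.re (inner ℂ (H (funProd A w x)) (funProd A w x) : ℂ) := by
          refine Finset.sum_le_sum fun w _ => ?_
          have := hkey (funProd A w x)
          simpa [funProd_cons] using this
        have reidx : ∑ w : Fin (N + 1) → Fin d,
            RCLike.re (inner ℂ (H (funProd A w x)) (funProd A w x) : ℂ)
            = ∑ w : Fin N → Fin d, ∑ j,
              RCLike.re
                (inner ℂ (H (funProd A (Fin.cons j w) x)) (funProd A (Fin.cons j w) x) : ℂ) := by
          rw [← Fintype.sum_equiv (Fin.consEquiv (fun _ => Fin d))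
            (fun p : Fin d × (Fin N → Fin d) => RCLike.re
              (inner ℂ (H (funProd A (Fin.cons p.1 p.2) x)) (funProd A (Fin.cons p.1 p.2) x) : ℂ))
            (fun w : Fin (N + 1) → Fin d => RCLike.re
              (inner ℂ (H (funProd A w x)) (funProd A w x) : ℂ))
            (fun p => rfl)]
          rw [Fintype.sum_prod_type]
          exact Finset.sum_comm
        rw [Finset.sum_range_succ]
        have h7 : (∑ w : Fin N → Fin d, ‖C (funProd A w x)‖ ^ 2)
            + ∑ w : Fin (N + 1) → Fin d,
              RCLike.re (inner ℂ (H (funProd A w x)) (funProd A w x) : ℂ)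
            ≤ ∑ w : Fin N → Fin d,
              RCLike.re (inner ℂ (H (funProd A w x)) (funProd A w x) : ℂ) := by
          rw [reidx, ← Finset.sum_add_distrib]
          exact step
        linarith
    have hle : RCLike.re (inner ℂ x (G x) : ℂ) ≤ RCLike.re (inner ℂ (H x) x : ℂ) := by
      refine hasSum_le_of_sum_le (norm_hasSum A C G hG x) ?_
      intro s
      set N := (s.sup List.length) + 1 with hN
      have hsub : s ⊆ (Finset.range N).biUnion
          (fun n => (Finset.univ : Finset (Fin n → Fin d)).image (fun w => List.ofFn w)) := by
        intro v hv
        refine Finset.mem_biUnion.mpr ⟨v.length,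
          Finset.mem_range.mpr (Nat.lt_succ_of_le (Finset.le_sup hv)), ?_⟩
        exact Finset.mem_image.mpr ⟨v.get, Finset.mem_univ _, List.ofFn_get v⟩
      have h8 : ∑ v ∈ s, ‖C (wordProd A v x)‖ ^ 2
          ≤ ∑ v ∈ (Finset.range N).biUnion
              (fun n => (Finset.univ : Finset (Fin n → Fin d)).image (fun w => List.ofFn w)),
            ‖C (wordProd A v x)‖ ^ 2 :=
        Finset.sum_le_sum_of_subset_of_nonneg hsub (fun v _ _ => by positivity)
      have hdisj : (↑(Finset.range N) : Set ℕ).PairwiseDisjoint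
          (fun n => (Finset.univ : Finset (Fin n → Fin d)).image (fun w => List.ofFn w)) := by
        intro m _ n _ hmn
        refine Finset.disjoint_left.mpr ?_
        rintro v hvm hvn
        obtain ⟨w, _, rfl⟩ := Finset.mem_image.mp hvm
        obtain ⟨u, _, hu⟩ := Finset.mem_image.mp hvn
        apply hmn
        have := congrArg List.length hu
        simpa using this.symm
      have h9 : ∑ v ∈ (Finset.range N).biUnion
            (fun n => (Finset.univ : Finset (Fin n → Fin d)).image (fun w => List.ofFn w)),
          ‖C (wordProd A v x)‖ ^ 2
          = ∑ n ∈ Finset.range N, ∑ w : Fin n → Fin d, ‖C (funProd A w x)‖ ^ 2 := by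
        rw [Finset.sum_biUnion hdisj]
        refine Finset.sum_congr rfl fun n _ => ?_
        rw [Finset.sum_image (fun a _ b _ h => List.ofFn_injective h)]
        rfl
      have h10 := hind N
      have tailnn : 0 ≤ ∑ w : Fin N → Fin d,
          RCLike.re (inner ℂ (H (funProd A w x)) (funProd A w x) : ℂ) :=
        Finset.sum_nonneg fun w _ => hpos _
      linarith
    rw [reApplyInnerSelf_apply, sub_apply, inner_sub_left, map_sub]
    have hsymm : RCLike.re (inner ℂ (G x) x : ℂ) = RCLike.re (inner ℂ x (G x) : ℂ) :=
      inner_re_symm _ _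
    linarith

end
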